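/- On a bicontinuous poset P, the Lawson topology is contained in the interval topology: every Lawson open set (every set of the form ↟x \ ↑F with F finite) is open in the interval topology. -/

import Mathlib

/-- A nonempty subset in which any two elements have an upper bound in the set. -/
def IsDirectedSet {P : Type*} [PartialOrder P] (S : Set P) : Prop :=
  S.Nonempty ∧ ∀ x ∈ S, ∀ y ∈ S, ∃ z ∈ S, x ≤ z ∧ y ≤ z

/-- A nonempty subset in which any two elements have a lower bound in the set. -/
def IsFilteredSet {P : Type*} [PartialOrder P] (S : Set P) : Prop :=
  S.Nonempty ∧ ∀ x ∈ S, ∀ y ∈ S, ∃ z ∈ S, z ≤ x ∧ z ≤ y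

/-- `WayBelow x y` (`x ≪ y`): for every directed set `S` that has a supremum `s`,
`y ≤ s` implies `x ≤ a` for some `a ∈ S`. -/
def WayBelow {P : Type*} [PartialOrder P] (x y : P) : Prop :=
  ∀ S : Set P, IsDirectedSet S → ∀ s, IsLUB S s → y ≤ s → ∃ a ∈ S, x ≤ a

/-- `↡x = {a | a ≪ x}`. -/
def waydown {P : Type*} [PartialOrder P] (x : P) : Set P := {a | WayBelow a x}

/-- `↟x = {a | x ≪ a}`. -/
def wayup {P : Type*} [PartialOrder P] (x : P) : Set P := {a | WayBelow x a}

/-- A poset is continuous if every `↡x` contains a directed set with supremum `x`. -/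
def IsContinuousPoset (P : Type*) [PartialOrder P] : Prop :=
  ∀ x : P, ∃ S : Set P, S ⊆ waydown x ∧ IsDirectedSet S ∧ IsLUB S x

/-- A continuous poset is bicontinuous if `≪` has the dual characterization via
filtered infima and each `↟x` is filtered with infimum `x`. -/
def IsBicontinuousPoset (P : Type*) [PartialOrder P] : Prop :=
  IsContinuousPoset P ∧
  (∀ x y : P, WayBelow x y ↔
    ∀ S : Set P, IsFilteredSet S → ∀ i, IsGLB S i → i ≤ x → ∃ s ∈ S, s ≤ y) ∧
  (∀ x : P, IsFilteredSet (wayup x) ∧ IsGLB (wayup x) x)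

/-- Scott open: an upper set inaccessible by directed suprema. -/
def IsScottOpen {P : Type*} [PartialOrder P] (U : Set P) : Prop :=
  (∀ x ∈ U, ∀ y, x ≤ y → y ∈ U) ∧
  ∀ S : Set P, IsDirectedSet S → ∀ s, IsLUB S s → s ∈ U → (S ∩ U).Nonempty

/-- The way-below open interval `(a,b) = {x | a ≪ x ≪ b}`. -/
def wayInterval {P : Type*} [PartialOrder P] (a b : P) : Set P :=
  {x | WayBelow a x ∧ WayBelow x b}

/-- The interval topology on a (bicontinuous) poset: generated by the sets `(a,b)`. -/
def intervalTop (P : Type*) [PartialOrder P] : TopologicalSpace P :=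
  TopologicalSpace.generateFrom {U : Set P | ∃ a b : P, U = wayInterval a b}

/-- The Lawson topology on a continuous poset: generated by the sets `↟x \ ↑F`
for `F` finite. -/
def lawsonTop (P : Type*) [PartialOrder P] : TopologicalSpace P :=
  TopologicalSpace.generateFrom
    {U : Set P | ∃ (x : P) (F : Set P), F.Finite ∧ U = wayup x \ {y | ∃ f ∈ F, f ≤ y}}


lemma WayBelow.le' {P : Type*} [PartialOrder P] {x y : P} (h : WayBelow x y) : x ≤ y := by
  obtain ⟨a, ha, hxa⟩ := h {y} ⟨⟨y, rfl⟩, fun u hu v hv => ⟨y, rfl, hu.le, hv.le⟩⟩ y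
    isLUB_singleton le_rfl
  rw [Set.mem_singleton_iff] at ha; exact ha ▸ hxa

lemma le_wayBelow {P : Type*} [PartialOrder P] {x w b : P} (h : x ≤ w) (hw : WayBelow w b) :
    WayBelow x b := fun S hS s hs hbs => by
  obtain ⟨a, ha, hwa⟩ := hw S hS s hs hbs
  exact ⟨a, ha, h.trans hwa⟩

lemma wayBelow_le {P : Type*} [PartialOrder P] {x b b' : P} (h : WayBelow x b) (hb : b ≤ b') :
    WayBelow x b' := fun S hS s hs hbs => h S hS s hs (hb.trans hbs)

lemma exists_bound {P : Type*} [PartialOrder P] (hP : IsBicontinuousPoset P) (z : P)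
    (F : Set P) (hF : F.Finite) :
    (∀ f ∈ F, ¬ f ≤ z) → ∃ b, WayBelow z b ∧ ∀ f ∈ F, ∀ w, WayBelow w b → ¬ f ≤ w := by
  refine Set.Finite.induction_on
    (motive := fun F _ => (∀ f ∈ F, ¬ f ≤ z) → ∃ b, WayBelow z b ∧ ∀ f ∈ F, ∀ w, WayBelow w b → ¬ f ≤ w)
    F hF ?_ ?_
  · intro _
    obtain ⟨b, hb⟩ := (hP.2.2 z).1.1
    exact ⟨b, hb, fun f hf => absurd hf (Set.notMem_empty f)⟩
  · intro f F hfF hFfin ih hz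
    obtain ⟨b', hb', hb'prop⟩ := ih (fun g hg => hz g (Set.mem_insert_of_mem _ hg))
    -- find b_f with z ≪ b_f and ¬ WayBelow f b_f
    have hfz : ¬ f ≤ z := hz f (Set.mem_insert _ _)
    have : ∃ bf, WayBelow z bf ∧ ¬ WayBelow f bf := by
      by_contra h
      push_neg at h
      have hlb : f ∈ lowerBounds (wayup z) := fun b hb => (h b hb).le'
      exact hfz ((hP.2.2 z).2.2 hlb)
    obtain ⟨bf, hbf, hnf⟩ := this
    obtain ⟨b, hbmem, hbb', hbbf⟩ := (hP.2.2 z).1.2 b' hb' bf hbf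
    refine ⟨b, hbmem, fun g hg w hw hgw => ?_⟩
    rcases Set.mem_insert_iff.mp hg with rfl | hg
    · exact hnf (le_wayBelow hgw (wayBelow_le hw hbbf))
    · exact hb'prop g hg w (wayBelow_le hw hbb') hgw

lemma generate_open_of_basis {α : Type*} (g : Set (Set α)) (U : Set α)
    (h : ∀ z ∈ U, ∃ V ∈ g, z ∈ V ∧ V ⊆ U) :
    (TopologicalSpace.generateFrom g).IsOpen U := by
  have hU : U = ⋃₀ {V | V ∈ g ∧ V ⊆ U} := by
    ext z
    constructor
    · intro hz
      obtain ⟨V, hVg, hzV, hVU⟩ := h z hz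
      exact ⟨V, ⟨hVg, hVU⟩, hzV⟩
    · rintro ⟨V, ⟨_, hVU⟩, hzV⟩
      exact hVU hzV
  rw [hU]
  exact TopologicalSpace.GenerateOpen.sUnion _
    (fun V hV => TopologicalSpace.GenerateOpen.basic V hV.1)

/-- On a bicontinuous poset, the Lawson topology is contained in the interval
topology. -/
theorem lawson_le_interval {P : Type*} [PartialOrder P] (hP : IsBicontinuousPoset P) :
    (∀ (x : P) (F : Set P), F.Finite →
      (intervalTop P).IsOpen (wayup x \ {y | ∃ f ∈ F, f ≤ y})) ∧
    ∀ U : Set P, (lawsonTop P).IsOpen U → (intervalTop P).IsOpen U := by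
  have part1 : ∀ (x : P) (F : Set P), F.Finite →
      (intervalTop P).IsOpen (wayup x \ {y | ∃ f ∈ F, f ≤ y}) := by
    intro x F hF
    apply generate_open_of_basis
    intro z hz
    obtain ⟨hzx, hzF⟩ := hz
    have hz' : ∀ f ∈ F, ¬ f ≤ z := by
      intro f hf hle
      exact hzF ⟨f, hf, hle⟩
    obtain ⟨b, hb, hbprop⟩ := exists_bound hP z F hF hz'
    refine ⟨wayInterval x b, ⟨x, b, rfl⟩, ⟨hzx, hb⟩, ?_⟩
    rintro w ⟨hxw, hwb⟩
    refine ⟨hxw, ?_⟩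
    rintro ⟨f, hf, hfw⟩
    exact hbprop f hf w hwb hfw
  refine ⟨part1, fun U hU => ?_⟩
  induction hU with
  | basic V hV =>
    obtain ⟨x, F, hF, rfl⟩ := hV
    exact part1 x F hF
  | univ => exact @isOpen_univ P (intervalTop P)
  | inter V W _ _ ihV ihW => exact @IsOpen.inter P (intervalTop P) V W ihV ihW
  | sUnion S _ ih => exact @isOpen_sUnion P (intervalTop P) S ih
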